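/- Let G = (V,E) be a finite simple graph that is λ-edge-connected for some integer λ ≥ 1, let T ⊆ E, and let M be the number of connected components of the spanning subgraph (V,T). Choose a random subset F ⊆ E∖T by including each edge of E∖T independently with probability q, where q ∈ [0,1] satisfies (1−q)^λ ≤ 1/e. Then with probability at least 1/2, either M = 1 or the number of connected components of (V, T ∪ F) is at most ((1 + 2/e)/2)·M. -/

import Mathlib

open Classical

noncomputable section

/-- The edge set of `G` as a `Finset` of `Sym2 V`. -/
def edgeFin {V : Type*} [Fintype V] (G : SimpleGraph V) : Finset (Sym2 V) :=
  Finset.univ.filter (fun e => e ∈ G.edgeSet)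

/-- The set of edges of `G` with exactly one endpoint in `S` (the cut `(S, V ∖ S)`). -/
def cutEdges {V : Type*} [Fintype V] (G : SimpleGraph V) (S : Finset V) : Finset (Sym2 V) :=
  Finset.univ.filter (fun e => e ∈ G.edgeSet ∧ ∃ u v, e = s(u, v) ∧ u ∈ S ∧ v ∉ S)

/-- The probability, under independent `Bernoulli(p)` sampling of each element of the
ground set `E`, that the sampled subset satisfies `Q`. -/
def cubePr {β : Type*} [DecidableEq β] (E : Finset β) (p : ℝ) (Q : Finset β → Prop) : ℝ :=
  ∑ S ∈ E.powerset, p ^ S.card * (1 - p) ^ (E.card - S.card) * (if Q S then 1 else 0)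

/-- `C` is (the vertex set of) a connected component of `H`. -/
def IsCompOf {V : Type*} [Fintype V] (H : SimpleGraph V) (C : Finset V) : Prop :=
  ∃ v : V, C = Finset.univ.filter (fun u => H.Reachable v u)

section CubeLemmas
variable {β : Type*} [DecidableEq β]

lemma weight_total (E : Finset β) (p : ℝ) :
    ∑ S ∈ E.powerset, p ^ S.card * (1 - p) ^ (E.card - S.card) = 1 := by
  have h := (Finset.prod_add (fun _ : β => p) (fun _ : β => (1 - p)) E).symm
  calc ∑ S ∈ E.powerset, p ^ S.card * (1 - p) ^ (E.card - S.card)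
      = ∑ S ∈ E.powerset, (∏ _i ∈ S, p) * ∏ _i ∈ E \ S, (1 - p) := by
        refine Finset.sum_congr rfl (fun S hS => ?_)
        rw [Finset.mem_powerset] at hS
        rw [Finset.prod_const, Finset.prod_const, Finset.card_sdiff_of_subset hS]
    _ = ∏ i ∈ E, (p + (1 - p)) := h
    _ = 1 := by simp

omit [DecidableEq β] in
lemma weight_nonneg {E : Finset β} {p : ℝ} (hp0 : 0 ≤ p) (hp1 : p ≤ 1) (S : Finset β) :
    0 ≤ p ^ S.card * (1 - p) ^ (E.card - S.card) :=
  mul_nonneg (pow_nonneg hp0 _) (pow_nonneg (by linarith) _)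

lemma cubePr_true (E : Finset β) (p : ℝ) {Q : Finset β → Prop}
    (h : ∀ S ∈ E.powerset, Q S) : cubePr E p Q = 1 := by
  have : cubePr E p Q = ∑ S ∈ E.powerset, p ^ S.card * (1 - p) ^ (E.card - S.card) :=
    Finset.sum_congr rfl (fun S hS => by rw [if_pos (h S hS), mul_one])
  rw [this, weight_total]

lemma cubePr_compl (E : Finset β) (p : ℝ) (Q : Finset β → Prop) :
    cubePr E p Q + cubePr E p (fun S => ¬ Q S) = 1 := by
  rw [cubePr, cubePr, ← Finset.sum_add_distrib]
  refine Eq.trans (Finset.sum_congr rfl ?_) (weight_total E p)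
  intro S _
  by_cases h : Q S <;> simp [h]

lemma cubePr_mono {E : Finset β} {p : ℝ} (hp0 : 0 ≤ p) (hp1 : p ≤ 1)
    {Q R : Finset β → Prop} (h : ∀ S ∈ E.powerset, Q S → R S) :
    cubePr E p Q ≤ cubePr E p R := by
  refine Finset.sum_le_sum (fun S hS => ?_)
  by_cases hQ : Q S
  · rw [if_pos hQ, if_pos (h S hS hQ)]
  · rw [if_neg hQ, mul_zero]
    by_cases hR : R S <;> simp [hR, weight_nonneg hp0 hp1 S]

lemma cubePr_disjoint {E D : Finset β} {p : ℝ} (hD : D ⊆ E) :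
    cubePr E p (fun S => S ∩ D = ∅) = (1 - p) ^ D.card := by
  have hfil : E.powerset.filter (fun S => S ∩ D = ∅) = (E \ D).powerset := by
    ext S
    simp only [Finset.mem_filter, Finset.mem_powerset, Finset.subset_sdiff,
      ← Finset.disjoint_iff_inter_eq_empty]
  have : cubePr E p (fun S => S ∩ D = ∅)
      = ∑ S ∈ (E \ D).powerset, p ^ S.card * (1 - p) ^ (E.card - S.card) := by
    rw [cubePr, ← hfil, Finset.sum_filter]
    refine Finset.sum_congr rfl (fun S _ => ?_)
    by_cases h : S ∩ D = ∅ <;> simp [h]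
  rw [this]
  have hcard : (E \ D).card = E.card - D.card := Finset.card_sdiff_of_subset hD
  have hDE : D.card ≤ E.card := Finset.card_le_card hD
  calc ∑ S ∈ (E \ D).powerset, p ^ S.card * (1 - p) ^ (E.card - S.card)
      = ∑ S ∈ (E \ D).powerset,
          (1 - p) ^ D.card * (p ^ S.card * (1 - p) ^ ((E \ D).card - S.card)) := by
        refine Finset.sum_congr rfl (fun S hS => ?_)
        rw [Finset.mem_powerset] at hS
        have hS' : S.card ≤ (E \ D).card := Finset.card_le_card hS
        have : E.card - S.card = ((E \ D).card - S.card) + D.card := by omega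
        rw [this, pow_add]; ring
    _ = (1 - p) ^ D.card := by
        rw [← Finset.mul_sum, weight_total, mul_one]

lemma cubePr_markov {E : Finset β} {p : ℝ} (hp0 : 0 ≤ p) (hp1 : p ≤ 1)
    (X : Finset β → ℝ) (hX : ∀ S ∈ E.powerset, 0 ≤ X S) {a : ℝ} (ha : 0 < a) :
    cubePr E p (fun S => a ≤ X S) ≤
      (∑ S ∈ E.powerset, p ^ S.card * (1 - p) ^ (E.card - S.card) * X S) / a := by
  rw [le_div_iff₀ ha, cubePr, Finset.sum_mul]
  refine Finset.sum_le_sum (fun S hS => ?_)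
  have hw := weight_nonneg (E := E) hp0 hp1 S
  by_cases h : a ≤ X S
  · rw [if_pos h, mul_one]
    exact mul_le_mul_of_nonneg_left h hw
  · rw [if_neg h, mul_zero, zero_mul]
    exact mul_nonneg hw (hX S hS)

end CubeLemmas

lemma fiber_count {A B : Type*} [Fintype A] [Fintype B] (f : A → B)
    (hf : Function.Surjective f) (P : A → Prop) [DecidablePred P]
    (h : ∀ a, ¬ P a → ∃ a', a' ≠ a ∧ f a' = f a) :
    2 * Fintype.card B ≤ Fintype.card A + (Finset.univ.filter P).card := by
  classical
  set Bp : Finset B := Finset.univ.filter (fun b => ∃ a, f a = b ∧ P a) with hBp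
  set Bi : Finset B := Finset.univ.filter (fun b => ¬ ∃ a, f a = b ∧ P a) with hBi
  have hsplit : Bp.card + Bi.card = Fintype.card B := by
    rw [hBp, hBi, Finset.card_filter_add_card_filter_not]
    rfl
  have hA : Fintype.card A = ∑ b ∈ Finset.univ, (Finset.univ.filter (fun a => f a = b)).card :=
    Finset.card_eq_sum_card_fiberwise (fun a _ => Finset.mem_univ (f a))
  have hfib : ∀ b : B, 1 ≤ (Finset.univ.filter (fun a => f a = b)).card := by
    intro b
    obtain ⟨a, ha⟩ := hf b
    exact Finset.card_pos.mpr ⟨a, by simp [ha]⟩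
  have hfib2 : ∀ b ∈ Bi, 2 ≤ (Finset.univ.filter (fun a => f a = b)).card := by
    intro b hb
    rw [hBi, Finset.mem_filter] at hb
    obtain ⟨a, ha⟩ := hf b
    have hPa : ¬ P a := fun hPa => hb.2 ⟨a, ha, hPa⟩
    obtain ⟨a', ha', hfa'⟩ := h a hPa
    refine Finset.one_lt_card.mpr ⟨a', by simp [hfa', ha], a, by simp [ha], ha'⟩
  have hAbound : Bp.card + 2 * Bi.card ≤ Fintype.card A := by
    rw [hA]
    have : Finset.univ = Bp ∪ Bi := by
      ext b
      by_cases hb : ∃ a, f a = b ∧ P a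
      · simp [hBp, hBi, hb]
      · simp only [hBp, hBi, Finset.mem_union, Finset.mem_filter, Finset.mem_univ, true_and]
        exact iff_of_true trivial (Or.inr hb)
    rw [this, Finset.sum_union]
    · refine add_le_add ?_ ?_
      · calc Bp.card = ∑ _b ∈ Bp, 1 := by simp
          _ ≤ _ := Finset.sum_le_sum (fun b _ => hfib b)
      · calc 2 * Bi.card = ∑ _b ∈ Bi, 2 := by simp [mul_comm]
          _ ≤ _ := Finset.sum_le_sum hfib2
    · rw [hBp, hBi]
      exact Finset.disjoint_filter_filter_not _ _ _
  have hinj : Bp.card ≤ (Finset.univ.filter P).card := by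
    have hsub : Bp ⊆ (Finset.univ.filter P).image f := by
      intro b hb
      rw [hBp, Finset.mem_filter] at hb
      obtain ⟨a, hfa, hPa⟩ := hb.2
      exact Finset.mem_image.mpr ⟨a, Finset.mem_filter.mpr ⟨Finset.mem_univ a, hPa⟩, hfa⟩
    exact le_trans (Finset.card_le_card hsub) (Finset.card_image_le)
  omega

theorem statement3 {V : Type*} [Fintype V] (G : SimpleGraph V)
    (lam : ℕ) (hlam : 1 ≤ lam)
    (hconn : ∀ S : Finset V, S.Nonempty → S ≠ Finset.univ → lam ≤ (cutEdges G S).card)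
    (T : Finset (Sym2 V)) (hT : T ⊆ edgeFin G)
    (M : ℕ)
    (hM : M = Nat.card (SimpleGraph.fromEdgeSet (↑T : Set (Sym2 V))).ConnectedComponent)
    (q : ℝ) (hq0 : 0 ≤ q) (hq1 : q ≤ 1)
    (hq : (1 - q) ^ lam ≤ 1 / Real.exp 1) :
    (1 : ℝ) / 2 ≤
      cubePr (edgeFin G \ T) q (fun F =>
        M = 1 ∨
          (Nat.card (SimpleGraph.fromEdgeSet (↑(T ∪ F) : Set (Sym2 V))).ConnectedComponent : ℝ) ≤
            ((1 + 2 / Real.exp 1) / 2) * M) := by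
  set eR := Real.exp 1 with heR
  have heRpos : (0:ℝ) < eR := Real.exp_pos 1
  set E' := edgeFin G \ T with hE'
  set H1 := SimpleGraph.fromEdgeSet (↑T : Set (Sym2 V)) with hH1
  haveI : Fintype H1.ConnectedComponent := Fintype.ofFinite _
  have hMcard : M = Fintype.card H1.ConnectedComponent := by
    rw [hM, Nat.card_eq_fintype_card]
  by_cases hM1 : M ≤ 1
  · -- trivial cases M = 0 or M = 1
    rcases Nat.le_one_iff_eq_zero_or_eq_one.mp hM1 with h0 | h1
    · have hVempty : IsEmpty V := by
        haveI : IsEmpty H1.ConnectedComponent :=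
          Fintype.card_eq_zero_iff.mp (by omega)
        exact ⟨fun v => IsEmpty.false (H1.connectedComponentMk v)⟩
      have h : ∀ F ∈ E'.powerset, (M = 1 ∨
          (Nat.card (SimpleGraph.fromEdgeSet (↑(T ∪ F) : Set (Sym2 V))).ConnectedComponent : ℝ) ≤
            ((1 + 2 / eR) / 2) * M) := by
        intro F _
        right
        haveI : IsEmpty (SimpleGraph.fromEdgeSet (↑(T ∪ F) : Set (Sym2 V))).ConnectedComponent := by
          refine ⟨fun c => ?_⟩
          exact c.ind (fun v => hVempty.false v)
        rw [Nat.card_of_isEmpty, h0]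
        norm_num
      rw [cubePr_true _ _ h]
      norm_num
    · have h : ∀ F ∈ E'.powerset, (M = 1 ∨
          (Nat.card (SimpleGraph.fromEdgeSet (↑(T ∪ F) : Set (Sym2 V))).ConnectedComponent : ℝ) ≤
            ((1 + 2 / eR) / 2) * M) := fun F _ => Or.inl h1
      rw [cubePr_true _ _ h]
      norm_num
  -- main case : 2 ≤ M
  push_neg at hM1
  have hM2 : 2 ≤ M := hM1
  set Sc : H1.ConnectedComponent → Finset V :=
    fun c => Finset.univ.filter (fun v => H1.connectedComponentMk v = c) with hSc
  set cut : H1.ConnectedComponent → Finset (Sym2 V) := fun c => cutEdges G (Sc c) with hcut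
  -- cut edges lie in E'
  have hcutE : ∀ c, cut c ⊆ E' := by
    intro c e he
    simp only [hcut, cutEdges, Finset.mem_filter, Finset.mem_univ, true_and] at he
    obtain ⟨heG, u, v, rfl, hu, hv⟩ := he
    have huv : u ≠ v := (G.mem_edgeSet.mp heG).ne
    rw [hE', Finset.mem_sdiff]
    refine ⟨by simp [edgeFin, heG], fun heT => ?_⟩
    have hadj : H1.Adj u v := by
      rw [hH1, SimpleGraph.fromEdgeSet_adj]
      exact ⟨heT, huv⟩
    have : H1.connectedComponentMk u = H1.connectedComponentMk v :=
      SimpleGraph.ConnectedComponent.sound hadj.reachable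
    simp only [hSc, Finset.mem_filter, Finset.mem_univ, true_and] at hu hv
    exact hv (this ▸ hu)
  -- cuts are large
  have hcutcard : ∀ c, lam ≤ (cut c).card := by
    intro c
    refine hconn _ ?_ ?_
    · obtain ⟨v, hv⟩ := Quot.exists_rep c
      exact ⟨v, by simp [hSc, ← hv]; rfl⟩
    · obtain ⟨c₂, hc₂⟩ := Fintype.exists_ne_of_one_lt_card (by omega) c
      obtain ⟨w, hw⟩ := Quot.exists_rep c₂
      intro hcontra
      have : w ∈ Sc c := hcontra ▸ Finset.mem_univ w
      simp only [hSc, Finset.mem_filter, Finset.mem_univ, true_and] at this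
      exact hc₂ (by rw [← hw, ← this]; rfl)
  -- the random variable counting untouched components
  set X : Finset (Sym2 V) → ℕ :=
    fun F => (Finset.univ.filter (fun c : H1.ConnectedComponent => F ∩ cut c = ∅)).card with hX
  -- merging bound
  have hmerge : ∀ F : Finset (Sym2 V),
      2 * Nat.card (SimpleGraph.fromEdgeSet (↑(T ∪ F) : Set (Sym2 V))).ConnectedComponent
        ≤ M + X F := by
    intro F
    set H2 := SimpleGraph.fromEdgeSet (↑(T ∪ F) : Set (Sym2 V)) with hH2
    haveI : Fintype H2.ConnectedComponent := Fintype.ofFinite _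
    have hle : H1 ≤ H2 := by
      rw [hH1, hH2]
      exact SimpleGraph.fromEdgeSet_mono (by rw [Finset.coe_union]; exact Set.subset_union_left)
    set φ : H1.ConnectedComponent → H2.ConnectedComponent :=
      SimpleGraph.ConnectedComponent.map (SimpleGraph.Hom.ofLE hle) with hφ
    have hφmk : ∀ v, φ (H1.connectedComponentMk v) = H2.connectedComponentMk v := by
      intro v
      rw [hφ, SimpleGraph.ConnectedComponent.map_mk, SimpleGraph.Hom.ofLE_apply]
    have hφs : Function.Surjective φ := by
      intro d
      refine d.ind (fun v => ⟨H1.connectedComponentMk v, hφmk v⟩)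
    have hkey : ∀ c, ¬ (F ∩ cut c = ∅) → ∃ c', c' ≠ c ∧ φ c' = φ c := by
      intro c hc
      obtain ⟨e, he⟩ := Finset.nonempty_iff_ne_empty.mpr hc
      rw [Finset.mem_inter] at he
      obtain ⟨heF, hec⟩ := he
      simp only [hcut, cutEdges, Finset.mem_filter, Finset.mem_univ, true_and] at hec
      obtain ⟨heG, u, v, rfl, hu, hv⟩ := hec
      have huv : u ≠ v := (G.mem_edgeSet.mp heG).ne
      simp only [hSc, Finset.mem_filter, Finset.mem_univ, true_and] at hu hv
      refine ⟨H1.connectedComponentMk v, hv, ?_⟩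
      have hadj : H2.Adj u v := by
        rw [hH2, SimpleGraph.fromEdgeSet_adj]
        exact ⟨by rw [Finset.coe_union]; exact Set.mem_union_right _ heF, huv⟩
      rw [← hu, hφmk, hφmk]
      exact (SimpleGraph.ConnectedComponent.sound hadj.reachable).symm
    have := fiber_count φ hφs (fun c => F ∩ cut c = ∅) hkey
    rw [Nat.card_eq_fintype_card]
    calc 2 * Fintype.card H2.ConnectedComponent
        ≤ Fintype.card H1.ConnectedComponent +
            (Finset.univ.filter (fun c => F ∩ cut c = ∅)).card := this
      _ = M + X F := by rw [hMcard, hX]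
  -- probability that a fixed component is untouched
  have hprob : ∀ c, cubePr E' q (fun F => F ∩ cut c = ∅) ≤ 1 / eR := by
    intro c
    rw [cubePr_disjoint (hcutE c)]
    calc (1 - q) ^ (cut c).card ≤ (1 - q) ^ lam :=
          pow_le_pow_of_le_one (by linarith) (by linarith) (hcutcard c)
      _ ≤ 1 / eR := hq
  -- expectation bound
  have hexp : ∑ F ∈ E'.powerset, q ^ F.card * (1 - q) ^ (E'.card - F.card) * (X F : ℝ)
      ≤ M / eR := by
    have hswap : ∑ F ∈ E'.powerset, q ^ F.card * (1 - q) ^ (E'.card - F.card) * (X F : ℝ)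
        = ∑ c : H1.ConnectedComponent, cubePr E' q (fun F => F ∩ cut c = ∅) := by
      calc ∑ F ∈ E'.powerset, q ^ F.card * (1 - q) ^ (E'.card - F.card) * (X F : ℝ)
          = ∑ F ∈ E'.powerset, ∑ c : H1.ConnectedComponent,
              q ^ F.card * (1 - q) ^ (E'.card - F.card) *
                (if F ∩ cut c = ∅ then (1:ℝ) else 0) := by
            refine Finset.sum_congr rfl (fun F _ => ?_)
            rw [← Finset.mul_sum]
            congr 1
            simp only [hX]
            rw [Finset.card_filter]
            push_cast
            rfl
        _ = ∑ c : H1.ConnectedComponent, ∑ F ∈ E'.powerset,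
              q ^ F.card * (1 - q) ^ (E'.card - F.card) *
                (if F ∩ cut c = ∅ then (1:ℝ) else 0) := Finset.sum_comm
        _ = ∑ c : H1.ConnectedComponent, cubePr E' q (fun F => F ∩ cut c = ∅) := by
            refine Finset.sum_congr rfl (fun c _ => ?_)
            rw [cubePr]
            refine Finset.sum_congr rfl (fun F _ => ?_)
            by_cases h : F ∩ cut c = ∅ <;> simp [h]
    rw [hswap]
    calc ∑ c : H1.ConnectedComponent, cubePr E' q (fun F => F ∩ cut c = ∅)
        ≤ ∑ _c : H1.ConnectedComponent, 1 / eR := Finset.sum_le_sum (fun c _ => hprob c)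
      _ = M / eR := by
          rw [Finset.sum_const, Finset.card_univ, ← hMcard, nsmul_eq_mul, mul_one_div]
  -- Markov inequality
  have hMpos : (0:ℝ) < M := by exact_mod_cast (by omega : 0 < M)
  have ha : (0:ℝ) < 2 * M / eR := by positivity
  have hmark : cubePr E' q (fun F => 2 * M / eR ≤ (X F : ℝ)) ≤ 1 / 2 := by
    refine le_trans
      (cubePr_markov hq0 hq1 (fun F => (X F : ℝ)) (fun S _ => by positivity) ha) ?_
    rw [div_le_iff₀ ha]
    calc ∑ F ∈ E'.powerset, q ^ F.card * (1 - q) ^ (E'.card - F.card) * (X F : ℝ)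
        ≤ M / eR := hexp
      _ = 1 / 2 * (2 * M / eR) := by ring
  have hcompl := cubePr_compl E' q (fun F => 2 * M / eR ≤ (X F : ℝ))
  have h1 : 1 / 2 ≤ cubePr E' q (fun F => ¬ (2 * M / eR ≤ (X F : ℝ))) := by linarith
  refine le_trans h1 (cubePr_mono hq0 hq1 ?_)
  intro F _ hF
  right
  have hm := hmerge F
  have hm' : 2 * ((Nat.card
      (SimpleGraph.fromEdgeSet (↑(T ∪ F) : Set (Sym2 V))).ConnectedComponent : ℝ))
      ≤ (M : ℝ) + (X F : ℝ) := by exact_mod_cast hm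
  have hXF : (X F : ℝ) < 2 * M / eR := lt_of_not_ge hF
  have hid : ((1 + 2 / eR) / 2) * (M:ℝ) = ((M:ℝ) + 2 * (M:ℝ) / eR) / 2 := by ring
  linarith
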